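/- Let 0 < i_1 < i_2 < ⋯ < i_m be integers, and define the poset P_B on {(k, l) : 1 ≤ k ≤ m, 1 ≤ l ≤ i_k} by (k', l') ≤ (k, l) if and only if l' ≤ l and i_{k'} − l' ≥ i_k − l. Let C_k = {(k, l) : 1 ≤ l ≤ i_k} be the k-th column, and let Δ_1 = i_1 and Δ_k = i_k − i_{k−1} for k > 1. Then the map sending a decreasing subset X ⊆ P_B to the tuple δ^X with δ^X_1 = #(X ∩ C_1) and δ^X_k = #(X ∩ C_k) − #(X ∩ C_{k−1}) for k > 1 is a bijection from the set of decreasing subsets of P_B onto the product [Δ_1] × [Δ_2] × ⋯ × [Δ_m], where [n] = {0, 1, …, n}. -/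

import Mathlib

/-- The Gelfand–Tsetlin-type poset `P_B` on pairs `(k, l)` with `1 ≤ l ≤ i k`,
where `(k', l') ≤ (k, l)` iff `l' ≤ l` and `i k' - l' ≥ i k - l`. -/
def GTPoset (m : ℕ) (i : Fin m → ℕ) : Type := {x : Fin m × ℕ // 1 ≤ x.2 ∧ x.2 ≤ i x.1}

instance (m : ℕ) (i : Fin m → ℕ) : Preorder (GTPoset m i) where
  le a b := a.val.2 ≤ b.val.2 ∧ i b.val.1 - b.val.2 ≤ i a.val.1 - a.val.2
  le_refl a := ⟨le_refl _, le_refl _⟩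
  le_trans a b c hab hbc := ⟨hab.1.trans hbc.1, hbc.2.trans hab.2⟩

/-- For the poset `P_B` built from `0 < i 0 < ⋯ < i (m-1)`, with columns
`C k = {(k, l) : 1 ≤ l ≤ i k}` and increments `Δ 0 = i 0`, `Δ k = i k - i (k-1)`, the map
sending a decreasing subset `X` to the tuple of increments
`δ^X_k = #(X ∩ C_k) - #(X ∩ C_{k-1})` (with `δ^X_0 = #(X ∩ C_0)`) is a bijection from the
decreasing subsets of `P_B` onto `[Δ_1] × ⋯ × [Δ_m]`, where `[n] = {0, …, n}`. -/
lemma GT.le_def {m : ℕ} {i : Fin m → ℕ} (a b : GTPoset m i) :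
    a ≤ b ↔ a.val.2 ≤ b.val.2 ∧ i b.val.1 - b.val.2 ≤ i a.val.1 - a.val.2 := Iff.rfl

lemma hIcc (n : ℕ) : (Set.Icc 1 n).ncard = n := by
  simp [Set.ncard_eq_toFinset_card']

lemma lemA (S : Set ℕ) (hfin : S.Finite) (h0 : ∀ l ∈ S, 1 ≤ l)
    (hdc : ∀ l ∈ S, ∀ l', 1 ≤ l' → l' ≤ l → l' ∈ S) :
    S = Set.Icc 1 S.ncard := by
  have hub : ∀ j ∈ S, j ≤ S.ncard := by
    intro j hj
    have hsub : Set.Icc 1 j ⊆ S := fun l hl => hdc j hj l hl.1 hl.2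
    have := Set.ncard_le_ncard hsub hfin
    rwa [hIcc] at this
  apply Set.eq_of_subset_of_ncard_le
  · intro j hj; exact ⟨h0 j hj, hub j hj⟩
  · rw [hIcc]
  · exact Set.finite_Icc _ _

/-- projection to the row index is injective on a column -/
lemma injOn_col {m : ℕ} {i : Fin m → ℕ} (k : Fin m) (A : Set (GTPoset m i))
    (hA : ∀ x ∈ A, x.val.1 = k) :
    Set.InjOn (fun y : GTPoset m i => y.val.2) A := by
  intro x hx y hy h
  apply Subtype.ext
  apply Prod.ext
  · rw [hA x hx, hA y hy]
  · exact h

/-- ncard of a column-truncation set -/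
lemma colcard {m : ℕ} {i : Fin m → ℕ} (X : Set (GTPoset m i)) (k : Fin m) (n : ℕ)
    (hn : n ≤ i k) (h : ∀ x : GTPoset m i, x.val.1 = k → (x ∈ X ↔ x.val.2 ≤ n)) :
    (X ∩ {y : GTPoset m i | y.val.1 = k}).ncard = n := by
  have hinj := injOn_col k (X ∩ {y : GTPoset m i | y.val.1 = k}) (fun x hx => hx.2)
  have himg : (fun y : GTPoset m i => y.val.2) '' (X ∩ {y | y.val.1 = k}) = Set.Icc 1 n := by
    ext l
    constructor
    · rintro ⟨y, ⟨hyX, hyk⟩, rfl⟩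
      exact ⟨y.prop.1, (h y hyk).1 hyX⟩
    · rintro ⟨h1, h2⟩
      refine ⟨⟨(k, l), h1, h2.trans hn⟩, ⟨(h _ rfl).2 h2, rfl⟩, rfl⟩
  rw [← Set.ncard_image_of_injOn hinj, himg, hIcc]

lemma mem_iff {m : ℕ} {i : Fin m → ℕ} (X : Set (GTPoset m i)) (hX : IsLowerSet X)
    (k : Fin m) (x : GTPoset m i) (hx : x.val.1 = k) :
    x ∈ X ↔ x.val.2 ≤ (X ∩ {y : GTPoset m i | y.val.1 = k}).ncard := by
  set A := X ∩ {y : GTPoset m i | y.val.1 = k} with hA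
  set T := (fun y : GTPoset m i => y.val.2) '' A with hT
  have hinj := injOn_col k A (fun x hx => hx.2)
  have hTsub : T ⊆ Set.Icc 1 (i k) := by
    rintro l ⟨y, ⟨hyX, hyk⟩, rfl⟩
    exact ⟨y.prop.1, by rw [← hyk]; exact y.prop.2⟩
  have hTfin : T.Finite := (Set.finite_Icc _ _).subset hTsub
  have hdc : ∀ l ∈ T, ∀ l', 1 ≤ l' → l' ≤ l → l' ∈ T := by
    rintro l ⟨y, ⟨hyX, hyk⟩, rfl⟩ l' h1 h2
    have hik : y.val.2 ≤ i k := by rw [← hyk]; exact y.prop.2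
    refine ⟨⟨(k, l'), h1, h2.trans hik⟩, ⟨?_, rfl⟩, rfl⟩
    refine hX ?_ hyX
    refine (GT.le_def _ _).2 ?_
    refine ⟨h2, ?_⟩
    show i y.val.1 - y.val.2 ≤ i k - l'
    rw [hyk]
    exact Nat.sub_le_sub_left h2 _
  have hcard : A.ncard = T.ncard := (Set.ncard_image_of_injOn hinj).symm
  have hTeq := lemA T hTfin (fun l hl => (hTsub hl).1) hdc
  constructor
  · intro hxX
    have hmem : x.val.2 ∈ T := ⟨x, ⟨hxX, hx⟩, rfl⟩
    rw [hTeq, Set.mem_Icc] at hmem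
    rw [hcard]
    exact hmem.2
  · intro hle
    have hmem : x.val.2 ∈ T := by
      rw [hTeq, Set.mem_Icc]
      exact ⟨x.prop.1, hcard ▸ hle⟩
    obtain ⟨y, hyA, hy2⟩ := hmem
    have heq : y = x := by
      apply Subtype.ext; apply Prod.ext
      · rw [hyA.2, hx]
      · exact hy2
    exact heq ▸ hyA.1

lemma col_ncard_le {m : ℕ} {i : Fin m → ℕ} (X : Set (GTPoset m i)) (k : Fin m) :
    (X ∩ {y : GTPoset m i | y.val.1 = k}).ncard ≤ i k := by
  set A := X ∩ {y : GTPoset m i | y.val.1 = k} with hA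
  have hinj := injOn_col k A (fun x hx => hx.2)
  have hTsub : (fun y : GTPoset m i => y.val.2) '' A ⊆ Set.Icc 1 (i k) := by
    rintro l ⟨y, ⟨hyX, hyk⟩, rfl⟩
    exact ⟨y.prop.1, by rw [← hyk]; exact y.prop.2⟩
  calc A.ncard = ((fun y : GTPoset m i => y.val.2) '' A).ncard :=
        (Set.ncard_image_of_injOn hinj).symm
    _ ≤ (Set.Icc 1 (i k)).ncard := Set.ncard_le_ncard hTsub (Set.finite_Icc _ _)
    _ = i k := hIcc _

lemma mono_c {m : ℕ} {i : Fin m → ℕ} (hmono : StrictMono i) (X : Set (GTPoset m i))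
    (hX : IsLowerSet X) (k' k : Fin m) (hkk : k' ≤ k) :
    (X ∩ {y : GTPoset m i | y.val.1 = k'}).ncard ≤
      (X ∩ {y : GTPoset m i | y.val.1 = k}).ncard := by
  set n := (X ∩ {y : GTPoset m i | y.val.1 = k'}).ncard with hn
  rcases Nat.eq_zero_or_pos n with h0 | h0
  · omega
  have hik : i k' ≤ i k := hmono.monotone hkk
  have hx' : (⟨(k', n), h0, col_ncard_le X k'⟩ : GTPoset m i) ∈ X :=
    (mem_iff X hX k' _ rfl).2 le_rfl
  have hx : (⟨(k, n), h0, le_trans (col_ncard_le X k') hik⟩ : GTPoset m i) ∈ X := by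
    refine hX ?_ hx'
    refine (GT.le_def _ _).2 ?_
    refine ⟨le_rfl, ?_⟩
    show i k' - n ≤ i k - n
    exact Nat.sub_le_sub_right hik n
  exact (mem_iff X hX k _ rfl).1 hx

lemma bound_c {m : ℕ} {i : Fin m → ℕ} (hmono : StrictMono i) (X : Set (GTPoset m i))
    (hX : IsLowerSet X) (k' k : Fin m) (hkk : k' ≤ k) :
    (X ∩ {y : GTPoset m i | y.val.1 = k}).ncard ≤
      (X ∩ {y : GTPoset m i | y.val.1 = k'}).ncard + (i k - i k') := by
  set n := (X ∩ {y : GTPoset m i | y.val.1 = k}).ncard with hn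
  set n' := (X ∩ {y : GTPoset m i | y.val.1 = k'}).ncard with hn'
  have hik : i k' ≤ i k := hmono.monotone hkk
  by_cases hcase : n ≤ i k - i k'
  · omega
  push_neg at hcase
  have h1 : 1 ≤ n := by omega
  have hni : n ≤ i k := col_ncard_le X k
  have hx : (⟨(k, n), h1, hni⟩ : GTPoset m i) ∈ X := (mem_iff X hX k _ rfl).2 le_rfl
  have hy : (⟨(k', n - (i k - i k')), show 1 ≤ n - (i k - i k') by omega,
      show n - (i k - i k') ≤ i k' by omega⟩ : GTPoset m i) ∈ X := by
    refine hX ?_ hx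
    refine (GT.le_def _ _).2 ?_
    refine ⟨show n - (i k - i k') ≤ n by omega, ?_⟩
    show i k - n ≤ i k' - (n - (i k - i k'))
    omega
  have h2 : n - (i k - i k') ≤ n' := (mem_iff X hX k' _ rfl).1 hy
  omega

def csum (f : ℕ → ℕ) (n : ℕ) : ℕ := ∑ j ∈ Finset.range (n + 1), f j

lemma csum_zero (f : ℕ → ℕ) : csum f 0 = f 0 := by simp [csum]

lemma csum_succ (f : ℕ → ℕ) (n : ℕ) : csum f (n + 1) = csum f n + f (n + 1) := by
  simp [csum, Finset.sum_range_succ]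

lemma csum_mono (f : ℕ → ℕ) : Monotone (csum f) := by
  intro a b hab
  exact Finset.sum_le_sum_of_subset (Finset.range_subset_range.2 (by omega))

lemma csum_le_csum (f g : ℕ → ℕ) (h : ∀ j, f j ≤ g j) (n : ℕ) : csum f n ≤ csum g n :=
  Finset.sum_le_sum fun j _ => h j

lemma csum_diff (f : ℕ → ℕ) {n' n : ℕ} (h : n' ≤ n) :
    csum f n = csum f n' + ∑ j ∈ Finset.Ico (n' + 1) (n + 1), f j := by
  unfold csum
  rw [Finset.range_eq_Ico,
    ← Finset.sum_Ico_consecutive f (by omega : 0 ≤ n' + 1) (by omega : n' + 1 ≤ n + 1)]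
  rw [Finset.range_eq_Ico]

lemma csum_diff_le (f g : ℕ → ℕ) (h : ∀ j, f j ≤ g j) {n' n : ℕ} (hn : n' ≤ n) :
    csum f n ≤ csum f n' + (csum g n - csum g n') := by
  rw [csum_diff f hn, csum_diff g hn]
  have := Finset.sum_le_sum (fun j (_ : j ∈ Finset.Ico (n' + 1) (n + 1)) => h j)
  omega

theorem stmt12 (m : ℕ) (i : Fin m → ℕ) (hmono : StrictMono i) (hpos : ∀ k, 0 < i k)
    (Δ : Fin m → ℕ)
    (hΔ : ∀ k : Fin m, Δ k = if k.val = 0 then i k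
      else i k - i ⟨k.val - 1, Nat.lt_of_le_of_lt (Nat.sub_le _ _) k.isLt⟩)
    (C : Fin m → Set (GTPoset m i)) (hC : ∀ k : Fin m, C k = {x | x.val.1 = k})
    (F : Set (GTPoset m i) → Fin m → ℕ)
    (hF : ∀ (X : Set (GTPoset m i)) (k : Fin m),
      F X k = if k.val = 0 then (X ∩ C k).ncard
        else (X ∩ C k).ncard -
          (X ∩ C ⟨k.val - 1, Nat.lt_of_le_of_lt (Nat.sub_le _ _) k.isLt⟩).ncard) :
    (∀ X : Set (GTPoset m i), IsLowerSet X → ∀ k, F X k ≤ Δ k) ∧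
    (∀ X Y : Set (GTPoset m i), IsLowerSet X → IsLowerSet Y → F X = F Y → X = Y) ∧
    (∀ δ : Fin m → ℕ, (∀ k, δ k ≤ Δ k) →
      ∃ X : Set (GTPoset m i), IsLowerSet X ∧ F X = δ) := by
  refine ⟨?_, ?_, ?_⟩
  · -- Part 1
    intro X hX k
    rw [hF, hΔ]
    by_cases h0 : k.val = 0
    · rw [if_pos h0, if_pos h0, hC]
      exact col_ncard_le X k
    · rw [if_neg h0, if_neg h0, hC, hC]
      set k' : Fin m := ⟨k.val - 1, Nat.lt_of_le_of_lt (Nat.sub_le _ _) k.isLt⟩ with hk'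
      have hkk : k' ≤ k := by rw [Fin.le_def]; simp [hk']
      have hb := bound_c hmono X hX k' k hkk
      have hik : i k' ≤ i k := hmono.monotone hkk
      omega
  · -- Part 2
    intro X Y hX hY hFXY
    have key : ∀ n : ℕ, ∀ h : n < m,
        (X ∩ {y : GTPoset m i | y.val.1 = (⟨n, h⟩ : Fin m)}).ncard =
        (Y ∩ {y : GTPoset m i | y.val.1 = (⟨n, h⟩ : Fin m)}).ncard := by
      intro n
      induction n with
      | zero =>
        intro h
        have hk := congrFun hFXY ⟨0, h⟩
        rw [hF, hF, if_pos rfl, if_pos rfl, hC] at hk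
        exact hk
      | succ p ih =>
        intro h
        have hp : p < m := by omega
        have hk := congrFun hFXY ⟨p + 1, h⟩
        rw [hF, hF, if_neg (by simp), if_neg (by simp), hC, hC] at hk
        simp only [Nat.add_sub_cancel] at hk
        have hle : (⟨p, hp⟩ : Fin m) ≤ ⟨p + 1, h⟩ := by rw [Fin.le_def]; simp
        have hmX := mono_c hmono X hX ⟨p, hp⟩ ⟨p + 1, h⟩ hle
        have hmY := mono_c hmono Y hY ⟨p, hp⟩ ⟨p + 1, h⟩ hle
        have hip := ih hp
        omega
    have hc : ∀ k : Fin m, (X ∩ {y : GTPoset m i | y.val.1 = k}).ncard =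
        (Y ∩ {y : GTPoset m i | y.val.1 = k}).ncard := by
      intro k
      have := key k.val k.isLt
      simpa using this
    ext x
    rw [mem_iff X hX x.val.1 x rfl, mem_iff Y hY x.val.1 x rfl, hc x.val.1]
  · -- Part 3
    intro δ hδ
    classical
    set δ' : ℕ → ℕ := fun n => if h : n < m then δ ⟨n, h⟩ else 0 with hδ'
    set Δ' : ℕ → ℕ := fun n => if h : n < m then Δ ⟨n, h⟩ else 0 with hΔ'
    have hpt : ∀ j, δ' j ≤ Δ' j := by
      intro j
      by_cases hj : j < m
      · simp only [hδ', hΔ', dif_pos hj]; exact hδ _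
      · simp only [hδ', hΔ', dif_neg hj]; exact le_rfl
    have hisum : ∀ n : ℕ, ∀ h : n < m, csum Δ' n = i ⟨n, h⟩ := by
      intro n
      induction n with
      | zero =>
        intro h
        rw [csum_zero, hΔ']
        simp only [dif_pos h]
        rw [hΔ, if_pos rfl]
      | succ p ih =>
        intro h
        have hp : p < m := by omega
        rw [csum_succ, ih hp, hΔ']
        simp only [dif_pos h]
        rw [hΔ ⟨p + 1, h⟩, if_neg (by simp)]
        simp only [Nat.add_sub_cancel]
        have hlt : i ⟨p, hp⟩ < i ⟨p + 1, h⟩ := hmono (by rw [Fin.lt_def]; simp)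
        omega
    have hcle : ∀ n : ℕ, ∀ h : n < m, csum δ' n ≤ i ⟨n, h⟩ := by
      intro n h
      rw [← hisum n h]
      exact csum_le_csum _ _ hpt n
    refine ⟨{x : GTPoset m i | x.val.2 ≤ csum δ' x.val.1.val}, ?_, ?_⟩
    · -- lower set
      intro b a hba hb
      obtain ⟨h1, h2⟩ := (GT.le_def a b).1 hba
      simp only [Set.mem_setOf_eq] at hb ⊢
      by_cases hcase : a.val.1.val ≤ b.val.1.val
      · have hi : i a.val.1 ≤ i b.val.1 := hmono.monotone (by rw [Fin.le_def]; exact hcase)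
        have hd := csum_diff_le δ' Δ' hpt hcase
        rw [hisum b.val.1.val b.val.1.isLt, hisum a.val.1.val a.val.1.isLt] at hd
        simp only [Fin.eta] at hd
        have hb2 := b.prop.2
        have ha2 := a.prop.2
        have ha1 := a.prop.1
        omega
      · have := csum_mono δ' (show b.val.1.val ≤ a.val.1.val by omega)
        omega
    · -- F X = δ
      funext k
      rw [hF]
      have hcol : ∀ k0 : Fin m,
          ({x : GTPoset m i | x.val.2 ≤ csum δ' x.val.1.val} ∩ C k0).ncard = csum δ' k0.val := by
        intro k0
        rw [hC]
        apply colcard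
        · have := hcle k0.val k0.isLt
          simpa using this
        · intro x hx
          simp only [Set.mem_setOf_eq, hx]
      by_cases h0 : k.val = 0
      · rw [if_pos h0, hcol]
        have hm0 : 0 < m := k.pos  -- maybe not; use lt_of_le_of_lt
        rw [h0, csum_zero, hδ']
        simp only [dif_pos hm0]
        congr 1
        exact Fin.ext h0.symm
      · rw [if_neg h0, hcol, hcol]
        obtain ⟨p, hp⟩ : ∃ p, k.val = p + 1 := ⟨k.val - 1, by omega⟩
        have hpm : p + 1 < m := hp ▸ k.isLt
        show csum δ' k.val - csum δ' (k.val - 1) = δ k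
        rw [hp]
        simp only [Nat.add_sub_cancel]
        rw [csum_succ]
        have hval : δ' (p + 1) = δ k := by
          rw [hδ']
          simp only [dif_pos hpm]
          congr 1
          exact Fin.ext hp.symm
        omega
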